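/- arXiv:2111.01422 — 3 statements merged into one kernel-verified Lean document; each statement's English description precedes it below -/
import Mathlib

section
/- Let D be an h-layer S-T DAG with arc capacities U, and let f be an α-blocking S-T flow (i.e., for every S-T path P there is an arc a ∈ P with f_a ≥ α·U_a). Then f is (α/h)-approximate: val(f) ≥ (α/h)·val(f*) where f* is a maximum S-T flow. -/
open Finset

/-- In an `h`-layer `S`-`T` DAG, any `α`-blocking flow is `(α/h)`-approximate.
We represent flows via their path decompositions over the finite set `Ps` of all (h-length)
S-T paths of the DAG; `g` is the path decomposition of the blocking flow `f`, `fstar` is an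
arbitrary feasible S-T flow (in particular the maximum one). -/
theorem blocking_flow_approx
    {Arc : Type} [DecidableEq Arc]
    (h : ℕ) (hh : 1 ≤ h)
    (Ps : Finset (List Arc))
    (hlen : ∀ P ∈ Ps, P.length ≤ h)
    (hnodup : ∀ P ∈ Ps, P.Nodup)
    (U : Arc → ℝ) (hU : ∀ a, 0 ≤ U a)
    (α : ℝ) (hα0 : 0 < α) (hα1 : α ≤ 1)
    (g fstar : List Arc → ℝ)
    (hg0 : ∀ P, 0 ≤ g P) (hf0 : ∀ P, 0 ≤ fstar P)
    (hgs : ∀ P ∉ Ps, g P = 0) (hfs : ∀ P ∉ Ps, fstar P = 0)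
    (hgcap : ∀ a : Arc, ∑ P ∈ Ps, (if a ∈ P then g P else 0) ≤ U a)
    (hfcap : ∀ a : Arc, ∑ P ∈ Ps, (if a ∈ P then fstar P else 0) ≤ U a)
    (hblock : ∀ P ∈ Ps, ∃ a ∈ P, α * U a ≤ ∑ Q ∈ Ps, (if a ∈ Q then g Q else 0)) :
    (α / h) * ∑ P ∈ Ps, fstar P ≤ ∑ P ∈ Ps, g P := by
  set G : Arc → ℝ := fun a => ∑ Q ∈ Ps, (if a ∈ Q then g Q else 0) with hGdef
  set F : Arc → ℝ := fun a => ∑ Q ∈ Ps, (if a ∈ Q then fstar Q else 0) with hFdef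
  have hG0 : ∀ a, 0 ≤ G a := by
    intro a
    refine Finset.sum_nonneg fun Q _ => ?_
    split <;> [exact hg0 Q; exact le_rfl]
  have hF0 : ∀ a, 0 ≤ F a := by
    intro a
    refine Finset.sum_nonneg fun Q _ => ?_
    split <;> [exact hf0 Q; exact le_rfl]
  set A : Finset Arc := Ps.biUnion List.toFinset with hAdef
  set c : Arc → ℝ := fun a => if U a = 0 then 0 else G a / U a with hcdef
  have hc0 : ∀ a, 0 ≤ c a := by
    intro a
    simp only [hcdef]
    split
    · exact le_rfl
    · exact div_nonneg (hG0 a) (hU a)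
  -- single path bound
  have hfleF : ∀ P ∈ Ps, ∀ a ∈ P, fstar P ≤ F a := by
    intro P hP a haP
    have := Finset.single_le_sum (f := fun Q => if a ∈ Q then fstar Q else 0)
      (fun Q _ => by by_cases hq : a ∈ Q <;> simp [hq, hf0 Q]) hP
    simpa [haP] using this
  have step1 : ∀ P ∈ Ps, α * fstar P ≤ ∑ a ∈ P.toFinset, c a * fstar P := by
    intro P hP
    obtain ⟨a, haP, hba⟩ := hblock P hP
    by_cases hUa : U a = 0
    · have h1 : fstar P ≤ 0 := le_trans (hfleF P hP a haP) (le_trans (hfcap a) hUa.le)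
      have h2 : fstar P = 0 := le_antisymm h1 (hf0 P)
      simp [h2]
    · have hUpos : 0 < U a := lt_of_le_of_ne (hU a) (Ne.symm hUa)
      have hαc : α ≤ c a := by
        simp only [hcdef, if_neg hUa]
        rw [le_div_iff₀ hUpos]
        exact hba
      have key : α * fstar P ≤ c a * fstar P :=
        mul_le_mul_of_nonneg_right hαc (hf0 P)
      refine le_trans key ?_
      exact Finset.single_le_sum (f := fun b => c b * fstar P)
        (fun b _ => mul_nonneg (hc0 b) (hf0 P)) (List.mem_toFinset.mpr haP)
  -- sum over paths
  have step2 : α * ∑ P ∈ Ps, fstar P ≤ ∑ a ∈ A, c a * F a := by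
    rw [Finset.mul_sum]
    have hsub : ∀ P ∈ Ps, P.toFinset ⊆ A := by
      intro P hP
      exact Finset.subset_biUnion_of_mem List.toFinset hP
    calc ∑ P ∈ Ps, α * fstar P
        ≤ ∑ P ∈ Ps, ∑ a ∈ P.toFinset, c a * fstar P :=
          Finset.sum_le_sum step1
      _ = ∑ P ∈ Ps, ∑ a ∈ A, (if a ∈ P then c a * fstar P else 0) := by
          refine Finset.sum_congr rfl fun P hP => ?_
          symm
          simp only [← List.mem_toFinset]
          rw [Finset.sum_ite_mem, Finset.inter_eq_right.mpr (hsub P hP)]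
      _ = ∑ a ∈ A, ∑ P ∈ Ps, (if a ∈ P then c a * fstar P else 0) :=
          Finset.sum_comm
      _ = ∑ a ∈ A, c a * F a := by
          refine Finset.sum_congr rfl fun a _ => ?_
          simp only [hFdef, Finset.mul_sum, mul_ite, mul_zero]
  have step3 : ∀ a, c a * F a ≤ G a := by
    intro a
    by_cases hUa : U a = 0
    · simpa [hcdef, hUa] using hG0 a
    · simp only [hcdef, if_neg hUa]
      calc G a / U a * F a ≤ G a / U a * U a :=
            mul_le_mul_of_nonneg_left (hfcap a) (div_nonneg (hG0 a) (hU a))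
        _ = G a := div_mul_cancel₀ _ hUa
  have step4 : ∑ a ∈ A, G a ≤ (h : ℝ) * ∑ P ∈ Ps, g P := by
    have hsub : ∀ P ∈ Ps, P.toFinset ⊆ A := fun P hP =>
      Finset.subset_biUnion_of_mem List.toFinset hP
    have : ∑ a ∈ A, G a = ∑ Q ∈ Ps, (Q.length : ℝ) * g Q := by
      simp only [hGdef]
      rw [Finset.sum_comm]
      refine Finset.sum_congr rfl fun Q hQ => ?_
      simp only [← List.mem_toFinset]
      rw [Finset.sum_ite_mem, Finset.inter_eq_right.mpr (hsub Q hQ),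
        Finset.sum_const, nsmul_eq_mul, List.toFinset_card_of_nodup (hnodup Q hQ)]
    rw [this, Finset.mul_sum]
    refine Finset.sum_le_sum fun Q hQ => ?_
    exact mul_le_mul_of_nonneg_right (by exact_mod_cast hlen Q hQ) (hg0 Q)
  have main : α * ∑ P ∈ Ps, fstar P ≤ (h : ℝ) * ∑ P ∈ Ps, g P :=
    le_trans step2 (le_trans (Finset.sum_le_sum fun a _ => step3 a) step4)
  have hhpos : (0 : ℝ) < h := by exact_mod_cast hh
  rw [div_mul_eq_mul_div, div_le_iff₀ hhpos]
  linarith [main]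
end

section
/- Let f̂ be an integral flow on an h-layer S-T DAG with total deficit deficit(f̂) = ∑_{v∉S∪T} |∑_{a∈δ⁺(v)} f̂_a − ∑_{a∈δ⁻(v)} f̂_a|. Then there exists an integral S-T flow f' that is a subflow of f̂ (f'_a ≤ f̂_a for all a) with val(f') ≥ val(f̂) − deficit(f̂). -/
open Finset

/-- Summing a function decremented by one at a single point. -/
lemma sum_dec {ι : Type*} [DecidableEq ι] (s : Finset ι) (a₀ : ι) (f : ι → ℤ) :
    ∑ b ∈ s, (if b = a₀ then f b - 1 else f b)
      = (∑ b ∈ s, f b) - (if a₀ ∈ s then 1 else 0) := by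
  have hcong : ∀ b ∈ s, (if b = a₀ then f b - 1 else f b)
      = f b - (if b = a₀ then (1:ℤ) else 0) := by
    intro b _; split_ifs <;> ring
  rw [Finset.sum_congr rfl hcong, Finset.sum_sub_distrib,
    Finset.sum_ite_eq' s a₀ (fun _ => (1:ℤ))]

lemma exists_pos_term {ι : Type*} (s : Finset ι) (f : ι → ℤ) (h0 : ∀ a, 0 ≤ f a)
    (hs : 0 < ∑ b ∈ s, f b) : ∃ a ∈ s, 0 < f a := by
  by_contra hc
  push_neg at hc
  have := Finset.sum_nonpos hc
  linarith

/-- Forward path decrement: if a vertex `v` (not in the first layer) has positive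
outflow, we can decrement `f` by one unit along a forward path starting at `v`,
ending in `T` or at a vertex whose imbalance improves. -/
lemma fwd_dec {V : Type} [DecidableEq V]
    (h : ℕ) (A : Finset (V × V)) (layer : V → ℕ)
    (hlayer : ∀ a ∈ A, layer a.1 < layer a.2 ∧ layer a.2 ≤ h)
    (S T : Finset V) (hS : ∀ v, v ∈ S ↔ layer v = 0) (hT : ∀ v, v ∈ T ↔ layer v = h)
    (n : ℕ) :
    ∀ f : V × V → ℤ, (∀ a, 0 ≤ f a) → ∀ v : V, h - layer v ≤ n → 0 < layer v →
      0 < ∑ a ∈ A.filter (fun a => a.1 = v), f a →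
      ∃ g : V × V → ℤ, (∀ a, 0 ≤ g a ∧ g a ≤ f a) ∧
        (∑ a ∈ A, g a) < ∑ a ∈ A, f a ∧
        (∑ a ∈ A.filter (fun a => a.1 ∈ S), g a) = (∑ a ∈ A.filter (fun a => a.1 ∈ S), f a) ∧
        |(∑ a ∈ A.filter (fun a => a.1 = v), g a) - ∑ a ∈ A.filter (fun a => a.2 = v), g a|
          ≤ |(∑ a ∈ A.filter (fun a => a.1 = v), f a)
              - (∑ a ∈ A.filter (fun a => a.2 = v), f a) - 1| ∧
        ∀ w, w ≠ v → w ∉ T →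
          |(∑ a ∈ A.filter (fun a => a.1 = w), g a) - ∑ a ∈ A.filter (fun a => a.2 = w), g a|
            ≤ |(∑ a ∈ A.filter (fun a => a.1 = w), f a)
                - ∑ a ∈ A.filter (fun a => a.2 = w), f a| := by
  induction n with
  | zero =>
    intro f hf v hn hv hout
    obtain ⟨a₀, ha₀, hpos⟩ := exists_pos_term _ f hf hout
    rw [Finset.mem_filter] at ha₀
    have hl := hlayer a₀ ha₀.1
    rw [ha₀.2] at hl
    omega
  | succ n ih =>
    intro f hf v hn hv hout
    obtain ⟨a₀, ha₀, hpos⟩ := exists_pos_term _ f hf hout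
    rw [Finset.mem_filter] at ha₀
    obtain ⟨ha₀A, ha₀v⟩ := ha₀
    have hlay := hlayer a₀ ha₀A
    have hvlt : layer v < layer a₀.2 := by rw [← ha₀v]; exact hlay.1
    have htv : a₀.2 ≠ v := by
      intro e; rw [e] at hvlt; omega
    have h12 : a₀.1 ≠ a₀.2 := by
      intro e; rw [e] at hlay; omega
    set f1 : V × V → ℤ := fun b => if b = a₀ then f b - 1 else f b with hf1def
    have hf1nn : ∀ a, 0 ≤ f1 a := by
      intro a; simp only [hf1def]; split_ifs with hb
      · subst hb; omega
      · exact hf a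
    have hf1le : ∀ a, f1 a ≤ f a := by
      intro a; simp only [hf1def]; split_ifs <;> omega
    have key : ∀ s : Finset (V × V),
        ∑ b ∈ s, f1 b = (∑ b ∈ s, f b) - (if a₀ ∈ s then 1 else 0) :=
      fun s => sum_dec s a₀ f
    have hsumA : ∑ b ∈ A, f1 b = (∑ b ∈ A, f b) - 1 := by
      rw [key]; simp [ha₀A]
    have hvS : v ∉ S := by rw [hS]; omega
    have hvT : v ∉ T := by rw [hT]; have := hlay.2; omega
    have hval : ∑ b ∈ A.filter (fun a => a.1 ∈ S), f1 b
        = ∑ b ∈ A.filter (fun a => a.1 ∈ S), f b := by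
      rw [key]; simp [Finset.mem_filter, ha₀v, hvS]
    have hout1 : ∀ w, ∑ b ∈ A.filter (fun a => a.1 = w), f1 b
        = (∑ b ∈ A.filter (fun a => a.1 = w), f b) - (if a₀.1 = w then 1 else 0) := by
      intro w; rw [key]; simp [Finset.mem_filter, ha₀A]
    have hin1 : ∀ w, ∑ b ∈ A.filter (fun a => a.2 = w), f1 b
        = (∑ b ∈ A.filter (fun a => a.2 = w), f b) - (if a₀.2 = w then 1 else 0) := by
      intro w; rw [key]; simp [Finset.mem_filter, ha₀A]
    have dv1 : (∑ a ∈ A.filter (fun a => a.1 = v), f1 a)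
          - (∑ a ∈ A.filter (fun a => a.2 = v), f1 a)
        = (∑ a ∈ A.filter (fun a => a.1 = v), f a)
          - (∑ a ∈ A.filter (fun a => a.2 = v), f a) - 1 := by
      rw [hout1, hin1, if_pos ha₀v, if_neg htv]; ring
    have dt1 : (∑ a ∈ A.filter (fun a => a.1 = a₀.2), f1 a)
          - (∑ a ∈ A.filter (fun a => a.2 = a₀.2), f1 a)
        = (∑ a ∈ A.filter (fun a => a.1 = a₀.2), f a)
          - (∑ a ∈ A.filter (fun a => a.2 = a₀.2), f a) + 1 := by
      rw [hout1, hin1, if_neg h12, if_pos rfl]; ring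
    have dw1 : ∀ w, a₀.1 ≠ w → a₀.2 ≠ w →
        (∑ a ∈ A.filter (fun a => a.1 = w), f1 a)
          - (∑ a ∈ A.filter (fun a => a.2 = w), f1 a)
        = (∑ a ∈ A.filter (fun a => a.1 = w), f a)
          - (∑ a ∈ A.filter (fun a => a.2 = w), f a) := by
      intro w h1 h2; rw [hout1, hin1, if_neg h1, if_neg h2]; ring
    have hlt : ∑ b ∈ A, f1 b < ∑ b ∈ A, f b := by rw [hsumA]; linarith
    by_cases htT : a₀.2 ∈ T
    · refine ⟨f1, fun a => ⟨hf1nn a, hf1le a⟩, hlt, hval, ?_, ?_⟩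
      · rw [dv1]
      · intro w hwv hwT
        rw [dw1 w (by rw [ha₀v]; exact Ne.symm hwv) (fun e => hwT (e ▸ htT))]
    · by_cases hd : (∑ a ∈ A.filter (fun a => a.1 = a₀.2), f a)
          - (∑ a ∈ A.filter (fun a => a.2 = a₀.2), f a) < 0
      · -- stop: the head of the arc had an inflow surplus, which improves
        refine ⟨f1, fun a => ⟨hf1nn a, hf1le a⟩, hlt, hval, ?_, ?_⟩
        · rw [dv1]
        · intro w hwv hwT
          by_cases hwt : w = a₀.2
          · subst hwt
            rw [dt1]
            simp only [Int.abs_eq_natAbs]; omega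
          · rw [dw1 w (by rw [ha₀v]; exact Ne.symm hwv) (fun e => hwt e.symm)]
      · -- continue forward from a₀.2
        push_neg at hd
        have hintpos : 0 < ∑ a ∈ A.filter (fun a => a.2 = a₀.2), f a := by
          have hmem : a₀ ∈ A.filter (fun a => a.2 = a₀.2) := by
            rw [Finset.mem_filter]; exact ⟨ha₀A, rfl⟩
          have := Finset.single_le_sum (f := f) (fun i _ => hf i) hmem
          linarith
        have houtt : 0 < ∑ a ∈ A.filter (fun a => a.1 = a₀.2), f1 a := by
          rw [hout1, if_neg h12]; linarith
        have hltT : layer a₀.2 ≠ h := by rw [hT] at htT; exact htT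
        obtain ⟨g, hg1, hg2, hg3, hg4, hg5⟩ :=
          ih f1 hf1nn a₀.2 (by have := hlay.2; omega) (by omega) houtt
        refine ⟨g, fun a => ⟨(hg1 a).1, le_trans (hg1 a).2 (hf1le a)⟩,
          by linarith, hg3.trans hval, ?_, ?_⟩
        · have := hg5 v (Ne.symm htv) hvT
          rwa [dv1] at this
        · intro w hwv hwT
          by_cases hwt : w = a₀.2
          · subst hwt
            have := hg4
            rw [dt1] at this
            calc |(∑ a ∈ A.filter (fun a => a.1 = a₀.2), g a)
                  - ∑ a ∈ A.filter (fun a => a.2 = a₀.2), g a|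
                ≤ |(∑ a ∈ A.filter (fun a => a.1 = a₀.2), f a)
                  - (∑ a ∈ A.filter (fun a => a.2 = a₀.2), f a) + 1 - 1| := this
              _ = |(∑ a ∈ A.filter (fun a => a.1 = a₀.2), f a)
                  - (∑ a ∈ A.filter (fun a => a.2 = a₀.2), f a)| := by ring_nf
          · have := hg5 w (fun e => hwt e) hwT
            rwa [dw1 w (by rw [ha₀v]; exact Ne.symm hwv) (fun e => hwt e.symm)] at this

/-- Backward path decrement: if a vertex `v` outside `S` has positive inflow,
we can decrement `f` by one unit along a backward path ending at `v`,
starting in `S` (costing at most one unit of value) or at a vertex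
whose imbalance improves. -/
lemma bwd_dec {V : Type} [DecidableEq V]
    (h : ℕ) (A : Finset (V × V)) (layer : V → ℕ)
    (hlayer : ∀ a ∈ A, layer a.1 < layer a.2 ∧ layer a.2 ≤ h)
    (S T : Finset V) (hS : ∀ v, v ∈ S ↔ layer v = 0) (hT : ∀ v, v ∈ T ↔ layer v = h)
    (n : ℕ) :
    ∀ f : V × V → ℤ, (∀ a, 0 ≤ f a) → ∀ v : V, layer v ≤ n → v ∉ S →
      0 < ∑ a ∈ A.filter (fun a => a.2 = v), f a →
      ∃ g : V × V → ℤ, (∀ a, 0 ≤ g a ∧ g a ≤ f a) ∧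
        (∑ a ∈ A, g a) < ∑ a ∈ A, f a ∧
        (∑ a ∈ A.filter (fun a => a.1 ∈ S), f a) - 1
          ≤ (∑ a ∈ A.filter (fun a => a.1 ∈ S), g a) ∧
        |(∑ a ∈ A.filter (fun a => a.1 = v), g a) - ∑ a ∈ A.filter (fun a => a.2 = v), g a|
          ≤ |(∑ a ∈ A.filter (fun a => a.1 = v), f a)
              - (∑ a ∈ A.filter (fun a => a.2 = v), f a) + 1| ∧
        ∀ w, w ≠ v → w ∉ S →
          |(∑ a ∈ A.filter (fun a => a.1 = w), g a) - ∑ a ∈ A.filter (fun a => a.2 = w), g a|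
            ≤ |(∑ a ∈ A.filter (fun a => a.1 = w), f a)
                - ∑ a ∈ A.filter (fun a => a.2 = w), f a| := by
  induction n with
  | zero =>
    intro f hf v hn hvS hin
    exact absurd ((hS v).2 (by omega)) hvS
  | succ n ih =>
    intro f hf v hn hvS hin
    obtain ⟨a₀, ha₀, hpos⟩ := exists_pos_term _ f hf hin
    rw [Finset.mem_filter] at ha₀
    obtain ⟨ha₀A, ha₀v⟩ := ha₀
    have hlay := hlayer a₀ ha₀A
    have hult : layer a₀.1 < layer v := by rw [← ha₀v]; exact hlay.1
    have huv : a₀.1 ≠ v := by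
      intro e; rw [e] at hult; omega
    have h12 : a₀.1 ≠ a₀.2 := by
      intro e; rw [e] at hlay; omega
    set f1 : V × V → ℤ := fun b => if b = a₀ then f b - 1 else f b with hf1def
    have hf1nn : ∀ a, 0 ≤ f1 a := by
      intro a; simp only [hf1def]; split_ifs with hb
      · subst hb; omega
      · exact hf a
    have hf1le : ∀ a, f1 a ≤ f a := by
      intro a; simp only [hf1def]; split_ifs <;> omega
    have key : ∀ s : Finset (V × V),
        ∑ b ∈ s, f1 b = (∑ b ∈ s, f b) - (if a₀ ∈ s then 1 else 0) :=
      fun s => sum_dec s a₀ f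
    have hsumA : ∑ b ∈ A, f1 b = (∑ b ∈ A, f b) - 1 := by
      rw [key]; simp [ha₀A]
    have hout1 : ∀ w, ∑ b ∈ A.filter (fun a => a.1 = w), f1 b
        = (∑ b ∈ A.filter (fun a => a.1 = w), f b) - (if a₀.1 = w then 1 else 0) := by
      intro w; rw [key]; simp [Finset.mem_filter, ha₀A]
    have hin1 : ∀ w, ∑ b ∈ A.filter (fun a => a.2 = w), f1 b
        = (∑ b ∈ A.filter (fun a => a.2 = w), f b) - (if a₀.2 = w then 1 else 0) := by
      intro w; rw [key]; simp [Finset.mem_filter, ha₀A]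
    have hval1 : (∑ b ∈ A.filter (fun a => a.1 ∈ S), f b) - (if a₀.1 ∈ S then 1 else 0)
        = ∑ b ∈ A.filter (fun a => a.1 ∈ S), f1 b := by
      rw [key]; simp [Finset.mem_filter, ha₀A]
    have dv1 : (∑ a ∈ A.filter (fun a => a.1 = v), f1 a)
          - (∑ a ∈ A.filter (fun a => a.2 = v), f1 a)
        = (∑ a ∈ A.filter (fun a => a.1 = v), f a)
          - (∑ a ∈ A.filter (fun a => a.2 = v), f a) + 1 := by
      rw [hout1, hin1, if_neg huv, if_pos ha₀v]; ring
    have du1 : (∑ a ∈ A.filter (fun a => a.1 = a₀.1), f1 a)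
          - (∑ a ∈ A.filter (fun a => a.2 = a₀.1), f1 a)
        = (∑ a ∈ A.filter (fun a => a.1 = a₀.1), f a)
          - (∑ a ∈ A.filter (fun a => a.2 = a₀.1), f a) - 1 := by
      have h21 : a₀.2 ≠ a₀.1 := fun e => h12 e.symm
      rw [hout1, hin1, if_pos rfl, if_neg h21]; ring
    have dw1 : ∀ w, a₀.1 ≠ w → a₀.2 ≠ w →
        (∑ a ∈ A.filter (fun a => a.1 = w), f1 a)
          - (∑ a ∈ A.filter (fun a => a.2 = w), f1 a)
        = (∑ a ∈ A.filter (fun a => a.1 = w), f a)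
          - (∑ a ∈ A.filter (fun a => a.2 = w), f a) := by
      intro w h1 h2; rw [hout1, hin1, if_neg h1, if_neg h2]; ring
    have hlt : ∑ b ∈ A, f1 b < ∑ b ∈ A, f b := by rw [hsumA]; linarith
    have hvalge : (∑ b ∈ A.filter (fun a => a.1 ∈ S), f b) - 1
        ≤ ∑ b ∈ A.filter (fun a => a.1 ∈ S), f1 b := by
      rw [← hval1]; split_ifs <;> linarith
    by_cases huS : a₀.1 ∈ S
    · refine ⟨f1, fun a => ⟨hf1nn a, hf1le a⟩, hlt, hvalge, ?_, ?_⟩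
      · rw [dv1]
      · intro w hwv hwS
        rw [dw1 w (fun e => hwS (e ▸ huS)) (by rw [ha₀v]; exact Ne.symm hwv)]
    · by_cases hd : 0 < (∑ a ∈ A.filter (fun a => a.1 = a₀.1), f a)
          - (∑ a ∈ A.filter (fun a => a.2 = a₀.1), f a)
      · -- stop: tail of the arc had an outflow surplus, which improves
        refine ⟨f1, fun a => ⟨hf1nn a, hf1le a⟩, hlt, hvalge, ?_, ?_⟩
        · rw [dv1]
        · intro w hwv hwS
          by_cases hwu : w = a₀.1
          · subst hwu
            rw [du1]
            simp only [Int.abs_eq_natAbs]; omega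
          · rw [dw1 w (fun e => hwu e.symm) (by rw [ha₀v]; exact Ne.symm hwv)]
      · -- continue backward from a₀.1
        push_neg at hd
        have houtpos : 0 < ∑ a ∈ A.filter (fun a => a.1 = a₀.1), f a := by
          have hmem : a₀ ∈ A.filter (fun a => a.1 = a₀.1) := by
            rw [Finset.mem_filter]; exact ⟨ha₀A, rfl⟩
          have := Finset.single_le_sum (f := f) (fun i _ => hf i) hmem
          linarith
        have hinu : 0 < ∑ a ∈ A.filter (fun a => a.2 = a₀.1), f1 a := by
          have h21 : a₀.2 ≠ a₀.1 := fun e => h12 e.symm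
          rw [hin1, if_neg h21]; linarith
        obtain ⟨g, hg1, hg2, hg3, hg4, hg5⟩ :=
          ih f1 hf1nn a₀.1 (by omega) huS hinu
        refine ⟨g, fun a => ⟨(hg1 a).1, le_trans (hg1 a).2 (hf1le a)⟩,
          by linarith, ?_, ?_, ?_⟩
        · have := hval1
          rw [if_neg huS] at this
          linarith [hg3, this.symm.le]
        · have := hg5 v (Ne.symm huv) hvS
          rwa [dv1] at this
        · intro w hwv hwS
          by_cases hwu : w = a₀.1
          · subst hwu
            have := hg4
            rw [du1] at this
            calc |(∑ a ∈ A.filter (fun a => a.1 = a₀.1), g a)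
                  - ∑ a ∈ A.filter (fun a => a.2 = a₀.1), g a|
                ≤ |(∑ a ∈ A.filter (fun a => a.1 = a₀.1), f a)
                  - (∑ a ∈ A.filter (fun a => a.2 = a₀.1), f a) - 1 + 1| := this
              _ = |(∑ a ∈ A.filter (fun a => a.1 = a₀.1), f a)
                  - (∑ a ∈ A.filter (fun a => a.2 = a₀.1), f a)| := by ring_nf
          · have := hg5 w (fun e => hwu e) hwS
            rwa [dw1 w (fun e => hwu e.symm) (by rw [ha₀v]; exact Ne.symm hwv)] at this

lemma main_aux {V : Type} [Fintype V] [DecidableEq V]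
    (h : ℕ) (A : Finset (V × V)) (layer : V → ℕ)
    (hlayer : ∀ a ∈ A, layer a.1 < layer a.2 ∧ layer a.2 ≤ h)
    (S T : Finset V) (hS : ∀ v, v ∈ S ↔ layer v = 0) (hT : ∀ v, v ∈ T ↔ layer v = h)
    (N : ℕ) :
    ∀ f : V × V → ℤ, (∀ a, 0 ≤ f a) → (∑ a ∈ A, f a) ≤ (N : ℤ) →
      ∃ f' : V × V → ℤ,
        (∀ a, 0 ≤ f' a ∧ f' a ≤ f a) ∧
        (∀ v, v ∉ S → v ∉ T →
          ∑ a ∈ A.filter (fun a => a.1 = v), f' a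
            = ∑ a ∈ A.filter (fun a => a.2 = v), f' a) ∧
        (∑ a ∈ A.filter (fun a => a.1 ∈ S), f a)
          - (∑ v ∈ Finset.univ.filter (fun v => v ∉ S ∧ v ∉ T),
              |(∑ a ∈ A.filter (fun a => a.1 = v), f a)
                - ∑ a ∈ A.filter (fun a => a.2 = v), f a|)
          ≤ ∑ a ∈ A.filter (fun a => a.1 ∈ S), f' a := by
  induction N with
  | zero =>
    intro f hf hN
    have hsum0 : ∑ a ∈ A, f a = 0 :=
      le_antisymm (by exact_mod_cast hN) (Finset.sum_nonneg fun i _ => hf i)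
    have hall : ∀ a ∈ A, f a = 0 :=
      (Finset.sum_eq_zero_iff_of_nonneg (fun i _ => hf i)).1 hsum0
    refine ⟨f, fun a => ⟨hf a, le_refl _⟩, ?_, ?_⟩
    · intro v _ _
      rw [Finset.sum_eq_zero fun a ha => hall a (Finset.mem_filter.1 ha).1,
        Finset.sum_eq_zero fun a ha => hall a (Finset.mem_filter.1 ha).1]
    · have hD : 0 ≤ ∑ v ∈ Finset.univ.filter (fun v => v ∉ S ∧ v ∉ T),
          |(∑ a ∈ A.filter (fun a => a.1 = v), f a)
            - ∑ a ∈ A.filter (fun a => a.2 = v), f a| :=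
        Finset.sum_nonneg fun i _ => abs_nonneg _
      linarith
  | succ N ih =>
    intro f hf hN
    by_cases hz : ∀ v, v ∉ S → v ∉ T →
        (∑ a ∈ A.filter (fun a => a.1 = v), f a)
          - (∑ a ∈ A.filter (fun a => a.2 = v), f a) = 0
    · refine ⟨f, fun a => ⟨hf a, le_refl _⟩, ?_, ?_⟩
      · intro v h1 h2
        have := hz v h1 h2
        linarith
      · have hD : 0 ≤ ∑ v ∈ Finset.univ.filter (fun v => v ∉ S ∧ v ∉ T),
            |(∑ a ∈ A.filter (fun a => a.1 = v), f a)
              - ∑ a ∈ A.filter (fun a => a.2 = v), f a| :=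
          Finset.sum_nonneg fun i _ => abs_nonneg _
        linarith
    · push_neg at hz
      obtain ⟨v, hvS, hvT, hdv⟩ := hz
      have hvmem : v ∈ Finset.univ.filter (fun v => v ∉ S ∧ v ∉ T) := by
        rw [Finset.mem_filter]; exact ⟨Finset.mem_univ v, hvS, hvT⟩
      have hinn : 0 ≤ ∑ a ∈ A.filter (fun a => a.2 = v), f a :=
        Finset.sum_nonneg fun i _ => hf i
      have houtn : 0 ≤ ∑ a ∈ A.filter (fun a => a.1 = v), f a :=
        Finset.sum_nonneg fun i _ => hf i
      -- obtain the improved flow g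
      have hmain : ∃ g : V × V → ℤ, (∀ a, 0 ≤ g a ∧ g a ≤ f a) ∧
          (∑ a ∈ A, g a) < ∑ a ∈ A, f a ∧
          (∑ a ∈ A.filter (fun a => a.1 ∈ S), f a) - 1
            ≤ (∑ a ∈ A.filter (fun a => a.1 ∈ S), g a) ∧
          |(∑ a ∈ A.filter (fun a => a.1 = v), g a)
              - ∑ a ∈ A.filter (fun a => a.2 = v), g a|
            ≤ |(∑ a ∈ A.filter (fun a => a.1 = v), f a)
                - ∑ a ∈ A.filter (fun a => a.2 = v), f a| - 1 ∧
          ∀ w, w ≠ v → w ∉ S → w ∉ T →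
            |(∑ a ∈ A.filter (fun a => a.1 = w), g a)
                - ∑ a ∈ A.filter (fun a => a.2 = w), g a|
              ≤ |(∑ a ∈ A.filter (fun a => a.1 = w), f a)
                  - ∑ a ∈ A.filter (fun a => a.2 = w), f a| := by
        rcases lt_or_gt_of_ne hdv with hneg | hpos
        · -- inflow surplus at v : decrement backward
          have hin : 0 < ∑ a ∈ A.filter (fun a => a.2 = v), f a := by linarith
          obtain ⟨g, hg1, hg2, hg3, hg4, hg5⟩ :=
            bwd_dec h A layer hlayer S T hS hT (layer v) f hf v (le_refl _) hvS hin
          refine ⟨g, hg1, hg2, hg3, ?_, fun w hw1 hw2 _ => hg5 w hw1 hw2⟩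
          calc |(∑ a ∈ A.filter (fun a => a.1 = v), g a)
                - ∑ a ∈ A.filter (fun a => a.2 = v), g a|
              ≤ |(∑ a ∈ A.filter (fun a => a.1 = v), f a)
                - (∑ a ∈ A.filter (fun a => a.2 = v), f a) + 1| := hg4
            _ ≤ |(∑ a ∈ A.filter (fun a => a.1 = v), f a)
                - ∑ a ∈ A.filter (fun a => a.2 = v), f a| - 1 := by
                simp only [Int.abs_eq_natAbs]; omega
        · -- outflow surplus at v : decrement forward
          have hout : 0 < ∑ a ∈ A.filter (fun a => a.1 = v), f a := by linarith
          have hv0 : 0 < layer v := by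
            have : layer v ≠ 0 := fun e => hvS ((hS v).2 e)
            omega
          obtain ⟨g, hg1, hg2, hg3, hg4, hg5⟩ :=
            fwd_dec h A layer hlayer S T hS hT h f hf v (Nat.sub_le h (layer v)) hv0 hout
          refine ⟨g, hg1, hg2, by rw [hg3]; linarith, ?_, fun w hw1 _ hw3 => hg5 w hw1 hw3⟩
          calc |(∑ a ∈ A.filter (fun a => a.1 = v), g a)
                - ∑ a ∈ A.filter (fun a => a.2 = v), g a|
              ≤ |(∑ a ∈ A.filter (fun a => a.1 = v), f a)
                - (∑ a ∈ A.filter (fun a => a.2 = v), f a) - 1| := hg4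
            _ ≤ |(∑ a ∈ A.filter (fun a => a.1 = v), f a)
                - ∑ a ∈ A.filter (fun a => a.2 = v), f a| - 1 := by
                simp only [Int.abs_eq_natAbs]; omega
      obtain ⟨g, hg1, hg2, hg3, hg4, hg5⟩ := hmain
      -- apply induction hypothesis to g
      have hgN : (∑ a ∈ A, g a) ≤ (N : ℤ) := by
        have h1 : (∑ a ∈ A, g a) + 1 ≤ ∑ a ∈ A, f a := Int.add_one_le_iff.mpr hg2
        push_cast at hN ⊢
        linarith
      obtain ⟨f', hf'1, hf'2, hf'3⟩ := ih g (fun a => (hg1 a).1) hgN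
      refine ⟨f', fun a => ⟨(hf'1 a).1, le_trans (hf'1 a).2 (hg1 a).2⟩, hf'2, ?_⟩
      -- deficit comparison
      have hDsum : ∑ w ∈ Finset.univ.filter (fun v => v ∉ S ∧ v ∉ T),
            |(∑ a ∈ A.filter (fun a => a.1 = w), g a)
              - ∑ a ∈ A.filter (fun a => a.2 = w), g a|
          ≤ (∑ w ∈ Finset.univ.filter (fun v => v ∉ S ∧ v ∉ T),
            |(∑ a ∈ A.filter (fun a => a.1 = w), f a)
              - ∑ a ∈ A.filter (fun a => a.2 = w), f a|) - 1 := by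
        rw [← Finset.add_sum_erase _ _ hvmem, ← Finset.add_sum_erase _ _ hvmem]
        have hrest : ∑ w ∈ (Finset.univ.filter (fun v => v ∉ S ∧ v ∉ T)).erase v,
              |(∑ a ∈ A.filter (fun a => a.1 = w), g a)
                - ∑ a ∈ A.filter (fun a => a.2 = w), g a|
            ≤ ∑ w ∈ (Finset.univ.filter (fun v => v ∉ S ∧ v ∉ T)).erase v,
              |(∑ a ∈ A.filter (fun a => a.1 = w), f a)
                - ∑ a ∈ A.filter (fun a => a.2 = w), f a| := by
          refine Finset.sum_le_sum fun w hw => ?_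
          rw [Finset.mem_erase, Finset.mem_filter] at hw
          exact hg5 w hw.1 hw.2.2.1 hw.2.2.2
        linarith
      linarith

/-- extracting an integral S-T subflow.  `D` is an `h`-layer S-T DAG
(witnessed by `layer`, with `S` the first layer and `T` the last), `fhat` is an integral
flow (nonnegative integer arc values bounded by capacities, supported on the arcs `A`).
Then there is an integral subflow `f'` of `fhat` with zero deficit at every vertex outside
`S ∪ T` whose value is at least `val(fhat) - deficit(fhat)`. -/
theorem integral_subflow_extraction
    {V : Type} [Fintype V] [DecidableEq V]
    (h : ℕ) (A : Finset (V × V))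
    (layer : V → ℕ)
    (hlayer : ∀ a ∈ A, layer a.1 < layer a.2 ∧ layer a.2 ≤ h)
    (S T : Finset V)
    (hS : ∀ v, v ∈ S ↔ layer v = 0) (hT : ∀ v, v ∈ T ↔ layer v = h)
    (U : V × V → ℤ)
    (fhat : V × V → ℤ)
    (hnn : ∀ a, 0 ≤ fhat a) (hcap : ∀ a, fhat a ≤ U a)
    (hsupp : ∀ a ∉ A, fhat a = 0) :
    ∃ f' : V × V → ℤ,
      (∀ a, 0 ≤ f' a ∧ f' a ≤ fhat a) ∧
      (∀ v, v ∉ S → v ∉ T →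
        ∑ a ∈ A.filter (fun a => a.1 = v), f' a = ∑ a ∈ A.filter (fun a => a.2 = v), f' a) ∧
      (∑ a ∈ A.filter (fun a => a.1 ∈ S), fhat a)
        - (∑ v ∈ Finset.univ.filter (fun v => v ∉ S ∧ v ∉ T),
            |(∑ a ∈ A.filter (fun a => a.1 = v), fhat a)
              - ∑ a ∈ A.filter (fun a => a.2 = v), fhat a|)
        ≤ ∑ a ∈ A.filter (fun a => a.1 ∈ S), f' a := by
  exact main_aux h A layer hlayer S T hS hT (∑ a ∈ A, fhat a).toNat fhat hnn
    (Int.self_le_toNat _)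
end

section
/- Let C be a collection of cycles in a graph G with congestion c (every edge lies in at most c cycles of C) and diameter d (every cycle has at most d edges). Then there exists a subcollection C' ⊆ C of pairwise edge-disjoint cycles such that the number of edges covered by C' is at least (1/(d²c²)) times the number of edges covered by C. -/
open Finset

/-- cycle decongestion.  Let `Cs` be a collection of cycles (each identified
with its edge set) in a graph with congestion `c` (every edge lies in at most `c` cycles)
and diameter `d` (every cycle has at most `d` edges).  Then there is a subcollection
`Cs' ⊆ Cs` of pairwise edge-disjoint cycles covering at least a `1/(d²c²)` fraction of the
edges covered by `Cs`. -/
theorem cycle_decongestion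
    {E : Type} [DecidableEq E]
    (Cs : Finset (Finset E)) (c d : ℕ)
    (hcong : ∀ e : E, (Cs.filter (fun C => e ∈ C)).card ≤ c)
    (hdiam : ∀ C ∈ Cs, C.card ≤ d) :
    ∃ Cs' ⊆ Cs, (∀ C₁ ∈ Cs', ∀ C₂ ∈ Cs', C₁ ≠ C₂ → Disjoint C₁ C₂) ∧
      ((Cs.biUnion id).card : ℝ) / ((d : ℝ) ^ 2 * (c : ℝ) ^ 2)
        ≤ ((Cs'.biUnion id).card : ℝ) := by
  classical
  set P : Finset (Finset E) → Prop :=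
    fun T => ∀ C₁ ∈ T, ∀ C₂ ∈ T, C₁ ≠ C₂ → Disjoint C₁ C₂ with hP
  obtain ⟨T, hT, hmax⟩ := (Cs.powerset.filter P).exists_max_image Finset.card
    ⟨∅, by simp [hP]⟩
  rw [mem_filter, mem_powerset] at hT
  obtain ⟨hTCs, hTdisj⟩ := hT
  -- Maximality: every cycle in Cs is in T or meets some member of T
  have key : ∀ C ∈ Cs, C ∈ T ∨ ∃ D ∈ T, ¬ Disjoint C D := by
    intro C hC
    by_contra h
    push_neg at h
    obtain ⟨hCT, hdisj⟩ := h
    have hmem : insert C T ∈ Cs.powerset.filter P := by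
      rw [mem_filter, mem_powerset]
      refine ⟨insert_subset hC hTCs, ?_⟩
      intro C₁ h₁ C₂ h₂ hne
      rcases mem_insert.mp h₁ with e₁ | h₁
      · rcases mem_insert.mp h₂ with e₂ | h₂
        · exact absurd (e₁.trans e₂.symm) hne
        · exact e₁ ▸ hdisj _ h₂
      · rcases mem_insert.mp h₂ with e₂ | h₂
        · exact e₂ ▸ (hdisj _ h₁).symm
        · exact hTdisj _ h₁ _ h₂ hne
    have := hmax _ hmem
    rw [card_insert_of_notMem hCT] at this
    omega
  -- Every covered edge lies in a cycle of Cs that meets the edges of T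
  have hsub : Cs.biUnion id ⊆
      (T.biUnion id).biUnion (fun f => (Cs.filter (fun C => f ∈ C)).biUnion id) := by
    intro e he
    rw [mem_biUnion] at he
    obtain ⟨C, hC, heC⟩ := he
    rw [mem_biUnion]
    rcases key C hC with hCT | ⟨D, hD, hnd⟩
    · exact ⟨e, mem_biUnion.mpr ⟨C, hCT, heC⟩,
        mem_biUnion.mpr ⟨C, mem_filter.mpr ⟨hC, heC⟩, heC⟩⟩
    · obtain ⟨f, hfC, hfD⟩ := Finset.not_disjoint_iff.mp hnd
      exact ⟨f, mem_biUnion.mpr ⟨D, hD, hfD⟩,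
        mem_biUnion.mpr ⟨C, mem_filter.mpr ⟨hC, hfC⟩, heC⟩⟩
  have h1 : (Cs.biUnion id).card ≤ (T.biUnion id).card * (c * d) := by
    calc (Cs.biUnion id).card
        ≤ ((T.biUnion id).biUnion
            (fun f => (Cs.filter (fun C => f ∈ C)).biUnion id)).card :=
          card_le_card hsub
      _ ≤ ∑ f ∈ T.biUnion id, ((Cs.filter (fun C => f ∈ C)).biUnion id).card :=
          card_biUnion_le
      _ ≤ ∑ f ∈ T.biUnion id, (c * d) := by
          refine Finset.sum_le_sum fun f _ => ?_
          calc ((Cs.filter (fun C => f ∈ C)).biUnion id).card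
              ≤ ∑ C ∈ Cs.filter (fun C => f ∈ C), C.card := card_biUnion_le
            _ ≤ ∑ C ∈ Cs.filter (fun C => f ∈ C), d :=
                Finset.sum_le_sum fun C hC => hdiam C (mem_filter.mp hC).1
            _ = (Cs.filter (fun C => f ∈ C)).card * d := by rw [Finset.sum_const, smul_eq_mul]
            _ ≤ c * d := Nat.mul_le_mul_right d (hcong f)
      _ = (T.biUnion id).card * (c * d) := by rw [Finset.sum_const, smul_eq_mul]
  refine ⟨T, hTCs, hTdisj, ?_⟩
  rcases eq_or_ne ((d : ℝ) ^ 2 * (c : ℝ) ^ 2) 0 with h0 | h0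
  · rw [h0, div_zero]; positivity
  · have hpos : (0 : ℝ) < (d : ℝ) ^ 2 * (c : ℝ) ^ 2 :=
      lt_of_le_of_ne (by positivity) (Ne.symm h0)
    rw [div_le_iff₀ hpos]
    have h1' : ((Cs.biUnion id).card : ℝ) ≤ ((T.biUnion id).card : ℝ) * (c * d) := by
      exact_mod_cast h1
    have hc1 : (1 : ℝ) ≤ (c : ℝ) := by
      have : c ≠ 0 := by rintro rfl; simp at h0
      exact_mod_cast Nat.one_le_iff_ne_zero.mpr this
    have hd1 : (1 : ℝ) ≤ (d : ℝ) := by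
      have : d ≠ 0 := by rintro rfl; simp at h0
      exact_mod_cast Nat.one_le_iff_ne_zero.mpr this
    have hY : (0 : ℝ) ≤ ((T.biUnion id).card : ℝ) := by positivity
    nlinarith [mul_le_mul_of_nonneg_left (mul_le_mul hd1 hc1 (by linarith) (by linarith))
      (mul_nonneg hY (mul_nonneg (by linarith : (0:ℝ) ≤ c) (by linarith : (0:ℝ) ≤ d)))]
end
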